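/- Let k ≥ 2, let t ∈ ℤ/kℤ, and let F be a set of vectors in (ℤ/kℤ)^n such that (f₁, f₂) = t for every f₁, f₂ ∈ F (including f₁ = f₂). Then |F| ≤ k^{n/2}. -/

import Mathlib

open Finset Complex

namespace Stmt12Aux

variable {k n : ℕ}

/-- The scalar product. -/
def B (x y : Fin n → ZMod k) : ZMod k := ∑ r, x r * y r

lemma B_comm (x y : Fin n → ZMod k) : B x y = B y x := by
  simp [B, mul_comm]

lemma B_add_left (x y z : Fin n → ZMod k) : B (x + y) z = B x z + B y z := by
  simp [B, add_mul, Finset.sum_add_distrib]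

lemma B_sub_left (x y z : Fin n → ZMod k) : B (x - y) z = B x z - B y z := by
  simp [B, sub_mul, Finset.sum_sub_distrib]

lemma B_zero_left (y : Fin n → ZMod k) : B 0 y = 0 := by simp [B]

lemma B_smul_left (c : ZMod k) (x y : Fin n → ZMod k) : B (c • x) y = c * B x y := by
  simp [B, Finset.mul_sum, mul_assoc]

lemma B_add_right (x y z : Fin n → ZMod k) : B x (y + z) = B x y + B x z := by
  rw [B_comm, B_add_left, B_comm y x, B_comm z x]

lemma B_sub_right (x y z : Fin n → ZMod k) : B x (y - z) = B x y - B x z := by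
  rw [B_comm, B_sub_left, B_comm y x, B_comm z x]

lemma B_zero_right (x : Fin n → ZMod k) : B x 0 = 0 := by simp [B]

lemma B_smul_right (c : ZMod k) (x y : Fin n → ZMod k) : B x (c • y) = c * B x y := by
  rw [B_comm, B_smul_left, B_comm y x]

lemma span_orth (S : Set (Fin n → ZMod k)) (hS : ∀ x ∈ S, ∀ y ∈ S, B x y = 0) :
    ∀ x ∈ Submodule.span (ZMod k) S, ∀ y ∈ Submodule.span (ZMod k) S, B x y = 0 := by
  have step : ∀ x ∈ S, ∀ y ∈ Submodule.span (ZMod k) S, B x y = 0 := by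
    intro x hx y hy
    induction hy using Submodule.span_induction with
    | mem z hz => exact hS x hx z hz
    | zero => exact B_zero_right x
    | add a b _ _ ha hb => rw [B_add_right, ha, hb, add_zero]
    | smul c a _ ha => rw [B_smul_right, ha, mul_zero]
  intro x hx y hy
  induction hx using Submodule.span_induction with
  | mem z hz => exact step z hz y hy
  | zero => exact B_zero_left y
  | add a b _ _ ha hb => rw [B_add_left, ha, hb, add_zero]
  | smul c a _ ha => rw [B_smul_left, ha, mul_zero]

end Stmt12Aux

open Stmt12Aux in
/-- If all pairwise (including self) scalar products of vectors of `F ⊆ (ℤ/kℤ)^n`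
equal a fixed `t ∈ ZMod k`, then `|F| ≤ k^(n/2)`. -/
theorem stmt_12 {k n : ℕ} (hk : 2 ≤ k) (t : ZMod k)
    (F : Finset (Fin n → ZMod k))
    (hF : ∀ f₁ ∈ F, ∀ f₂ ∈ F, ∑ r, f₁ r * f₂ r = t) :
    (F.card : ℝ) ≤ (k : ℝ) ^ ((n : ℝ) / 2) := by
  classical
  have hk0 : k ≠ 0 := by omega
  haveI : NeZero k := ⟨hk0⟩
  rcases F.eq_empty_or_nonempty with rfl | ⟨f₀, hf₀⟩
  · simp only [Finset.card_empty, Nat.cast_zero]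
    positivity
  -- the character
  set ζ : ℂ := Complex.exp (2 * Real.pi * Complex.I / k) with hζdef
  have hζ : IsPrimitiveRoot ζ k := Complex.isPrimitiveRoot_exp k hk0
  set ψ : AddChar (ZMod k) ℂ := AddChar.zmodChar k hζ.pow_eq_one with hψdef
  have hψprim : ψ.IsPrimitive := AddChar.zmodChar_primitive_of_primitive_root k hζ
  have hζabs : ‖ζ‖ = 1 := by
    rw [hζdef, Complex.norm_exp]
    norm_num [Complex.div_re, Complex.mul_re, Complex.mul_im]
  have habs : ∀ a : ZMod k, ‖ψ a‖ = 1 := by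
    intro a
    rw [hψdef, AddChar.zmodChar_apply, norm_pow, hζabs, one_pow]
  have hne : ∀ a : ZMod k, ψ a ≠ 0 := by
    intro a h
    have := habs a
    rw [h] at this
    simp at this
  have hconj : ∀ a : ZMod k, (starRingEnd ℂ) (ψ a) = ψ (-a) := by
    intro a
    have h1 : ψ (-a) * ψ a = 1 := by
      rw [← AddChar.map_add_eq_mul, neg_add_cancel, AddChar.map_zero_eq_one]
    have h2 : (starRingEnd ℂ) (ψ a) * ψ a = 1 := by
      rw [mul_comm, Complex.mul_conj, ← Complex.sq_norm, habs]
      norm_num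
    exact mul_right_cancel₀ (hne a) (h2.trans h1.symm)
  -- key sum
  have hcardV : Fintype.card (Fin n → ZMod k) = k ^ n := by
    simp [ZMod.card]
  have key : ∀ v : Fin n → ZMod k,
      ∑ x : Fin n → ZMod k, ψ (B v x) = if v = 0 then ((k : ℂ) ^ n) else 0 := by
    intro v
    by_cases hv : v = 0
    · simp [hv, B_zero_left, hcardV]
    · simp only [hv, if_false]
      obtain ⟨r, hr⟩ : ∃ r, v r ≠ 0 := by
        by_contra h
        push_neg at h
        exact hv (funext fun r => h r)
      have hms := hψprim hr
      rw [AddChar.ne_one_iff] at hms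
      obtain ⟨c, hc⟩ := hms
      rw [AddChar.mulShift_apply] at hc
      let φv : (Fin n → ZMod k) →+ ZMod k :=
        { toFun := fun x => B v x
          map_zero' := B_zero_right v
          map_add' := fun x y => B_add_right v x y }
      have : ∑ x : Fin n → ZMod k, (ψ.compAddMonoidHom φv) x = 0 := by
        apply AddChar.sum_eq_zero_of_ne_one
        rw [AddChar.ne_one_iff]
        refine ⟨fun s => if s = r then c else 0, ?_⟩
        have hBx : B v (fun s => if s = r then c else 0) = v r * c := by
          simp [B, mul_ite]
        simpa [φv, hBx, mul_comm (v r) c] using hc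
      simpa [φv] using this
  -- the span
  set G : Set (Fin n → ZMod k) := (fun f => f - f₀) '' ↑F with hGdef
  set H := Submodule.span (ZMod k) G with hHdef
  have hGorth : ∀ x ∈ G, ∀ y ∈ G, B x y = 0 := by
    rintro x ⟨f, hf, rfl⟩ y ⟨g, hg, rfl⟩
    have h1 : ∀ a ∈ F, ∀ b ∈ F, B a b = t := fun a ha b hb => hF a ha b hb
    rw [B_sub_left, B_sub_right, B_sub_right,
      h1 f hf g hg, h1 f hf f₀ hf₀, h1 f₀ hf₀ g hg, h1 f₀ hf₀ f₀ hf₀]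
    ring
  have hHorth : ∀ x ∈ H, ∀ y ∈ H, B x y = 0 := span_orth G hGorth
  set Hs : Finset (Fin n → ZMod k) := (Set.toFinite (H : Set (Fin n → ZMod k))).toFinset with hHsdef
  have hHs : ∀ x, x ∈ Hs ↔ x ∈ H := fun x => Set.Finite.mem_toFinset _
  set N : ℕ := Hs.card with hNdef
  have hFN : F.card ≤ N := by
    apply Finset.card_le_card_of_injOn (fun f => f - f₀)
    · intro f hf
      rw [Finset.mem_coe, hHs]
      exact Submodule.subset_span ⟨f, hf, rfl⟩
    · intro a _ b _ h
      simpa using sub_left_injective h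
  have hN1 : 1 ≤ N :=
    Finset.card_pos.mpr ⟨0, (hHs 0).mpr (Submodule.zero_mem H)⟩
  -- the double counting
  set S : (Fin n → ZMod k) → ℂ := fun x => ∑ h ∈ Hs, ψ (B h x) with hSdef
  have hT : ∑ x : Fin n → ZMod k, Complex.normSq (S x) = (N : ℝ) * (k : ℝ) ^ n := by
    have hc : ((∑ x : Fin n → ZMod k, Complex.normSq (S x) : ℝ) : ℂ)
        = ∑ x : Fin n → ZMod k, S x * (starRingEnd ℂ) (S x) := by
      push_cast
      refine Finset.sum_congr rfl fun x _ => ?_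
      rw [Complex.mul_conj]
    have hmain : ∑ x : Fin n → ZMod k, S x * (starRingEnd ℂ) (S x)
        = (N : ℂ) * (k : ℂ) ^ n := by
      have hconjS : ∀ x, (starRingEnd ℂ) (S x) = ∑ h ∈ Hs, ψ (- B h x) := by
        intro x
        simp only [hSdef, map_sum]
        exact Finset.sum_congr rfl fun h _ => hconj _
      calc ∑ x : Fin n → ZMod k, S x * (starRingEnd ℂ) (S x)
          = ∑ x : Fin n → ZMod k, ∑ h ∈ Hs, ∑ h' ∈ Hs, ψ (B (h - h') x) := by
            refine Finset.sum_congr rfl fun x _ => ?_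
            rw [hconjS, hSdef, Finset.sum_mul_sum]
            refine Finset.sum_congr rfl fun h _ => Finset.sum_congr rfl fun h' _ => ?_
            rw [← AddChar.map_add_eq_mul, B_sub_left, sub_eq_add_neg]
        _ = ∑ h ∈ Hs, ∑ h' ∈ Hs, ∑ x : Fin n → ZMod k, ψ (B (h - h') x) := by
            rw [Finset.sum_comm]
            exact Finset.sum_congr rfl fun h _ => Finset.sum_comm
        _ = ∑ h ∈ Hs, ∑ h' ∈ Hs, if h - h' = 0 then ((k : ℂ) ^ n) else 0 := by
            exact Finset.sum_congr rfl fun h _ => Finset.sum_congr rfl fun h' _ => key _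
        _ = (N : ℂ) * (k : ℂ) ^ n := by
            simp only [sub_eq_zero]
            rw [Finset.sum_comm]
            simp [Finset.sum_ite_eq, hNdef, mul_comm]
    have := hc.trans hmain
    exact_mod_cast this
  have hlower : (N : ℝ) * (N : ℝ) ^ 2 ≤ ∑ x : Fin n → ZMod k, Complex.normSq (S x) := by
    have hsub : ∑ x ∈ Hs, Complex.normSq (S x) ≤ ∑ x : Fin n → ZMod k, Complex.normSq (S x) := by
      apply Finset.sum_le_sum_of_subset_of_nonneg (Finset.subset_univ _)
      intro i _ _
      exact Complex.normSq_nonneg _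
    have hval : ∀ x ∈ Hs, Complex.normSq (S x) = (N : ℝ) ^ 2 := by
      intro x hx
      have hSx : S x = (N : ℂ) := by
        have h1 : ∀ h ∈ Hs, ψ (B h x) = 1 := fun h hh => by
          rw [hHorth h ((hHs h).mp hh) x ((hHs x).mp hx), AddChar.map_zero_eq_one]
        show ∑ h ∈ Hs, ψ (B h x) = (N : ℂ)
        rw [Finset.sum_congr rfl h1, Finset.sum_const, nsmul_eq_mul, mul_one, hNdef]
      rw [hSx, show ((N : ℂ)) = ((N : ℝ) : ℂ) by push_cast; ring,
        Complex.normSq_ofReal]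
      ring
    calc (N : ℝ) * (N : ℝ) ^ 2 = ∑ x ∈ Hs, (N : ℝ) ^ 2 := by
          rw [Finset.sum_const, hNdef]; ring
      _ = ∑ x ∈ Hs, Complex.normSq (S x) := (Finset.sum_congr rfl hval).symm
      _ ≤ _ := hsub
  have hN2 : (N : ℝ) ^ 2 ≤ (k : ℝ) ^ n := by
    have hNpos : (0 : ℝ) < N := by exact_mod_cast hN1
    nlinarith [hlower.trans hT.le]
  have hF2 : (F.card : ℝ) ^ 2 ≤ (k : ℝ) ^ n := by
    have : (F.card : ℝ) ≤ (N : ℝ) := by exact_mod_cast hFN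
    nlinarith [Nat.cast_nonneg (α := ℝ) F.card]
  have hrpow : (k : ℝ) ^ ((n : ℝ) / 2) = Real.sqrt ((k : ℝ) ^ n) := by
    rw [show ((n : ℝ) / 2) = (n : ℝ) * (1 / 2) by ring,
      Real.rpow_mul (by positivity), Real.rpow_natCast, ← Real.sqrt_eq_rpow]
  rw [hrpow]
  rw [show ((F.card : ℝ)) = Real.sqrt ((F.card : ℝ) ^ 2) by
    rw [Real.sqrt_sq (Nat.cast_nonneg _)]]
  exact Real.sqrt_le_sqrt hF2
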